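/- Let k be a field, let p, q ∈ k[x] be monic polynomials of respective degrees n and n−1, and set H = H_n(q/p) ∈ k^{n×n}. Then: (a) the matrix C_p^T·H is symmetric; (b) det(H)·p(x) = det(x·H − C_p^T·H) in k[x]; and (c) if H = K·D·K^T where K ∈ k^{n×n} is lower triangular with all diagonal entries equal to 1 and D ∈ k^{n×n} is diagonal, then the matrix Td = K^{−1}·C_p^T·K·D is symmetric and tridiagonal and det(D)·p(x) = det(x·D − Td). -/

import Mathlib

open Polynomial Matrix BigOperators Finset

/-- The companion matrix over a field `k` of `p(x) = x^n + a_{n-1}x^{n-1} + ⋯ + a_0`: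
1's on the first subdiagonal, last column `(−a_0, …, −a_{n-1})ᵀ`, zeros elsewhere. -/
def companion (k : Type*) [Field k] (n : ℕ) (p : Polynomial k) :
    Matrix (Fin n) (Fin n) k :=
  Matrix.of fun i j =>
    if (j : ℕ) = n - 1 then -p.coeff (i : ℕ)
    else if (i : ℕ) = (j : ℕ) + 1 then 1
    else 0

/-- The coefficients `(s_j)` of the expansion `q(x)/p(x) = Σ_{j≥0} s_j·x^{−j−1}` at
infinity, over a field `k`. -/
noncomputable def hankelSeq (k : Type*) [Field k] (n : ℕ) (p q : Polynomial k) :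
    ℕ → k := fun j =>
  PowerSeries.coeff j
    (((Polynomial.reflect (n - 1) q : Polynomial k) : PowerSeries k) *
      ((Polynomial.reflect n p : Polynomial k) : PowerSeries k)⁻¹)

/-- The Hankel matrix `H_n(q/p) = (s_{i+j})_{0≤i,j≤n−1}` over `k`. -/
noncomputable def hankelMat (k : Type*) [Field k] (n : ℕ) (p q : Polynomial k) :
    Matrix (Fin n) (Fin n) k :=
  Matrix.of fun i j : Fin n => hankelSeq k n p q ((i : ℕ) + (j : ℕ))

lemma comp_det (k : Type*) [Field k] : ∀ (n : ℕ) (c : ℕ → k),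
    ((X : Polynomial k) • (1 : Matrix (Fin (n+1)) (Fin (n+1)) (Polynomial k)) -
      (Matrix.of fun i j : Fin (n+1) =>
        if (j:ℕ) = n then -c i else if (i:ℕ) = (j:ℕ)+1 then 1 else 0).map C).det
    = X^(n+1) + ∑ i ∈ range (n+1), C (c i) * X^i := by
  intro n
  induction n with
  | zero =>
    intro c
    rw [Matrix.det_fin_one]
    simp [Matrix.smul_apply, Matrix.one_apply, Matrix.map_apply]
  | succ n ih =>
    intro c
    set A : Matrix (Fin (n+2)) (Fin (n+2)) (Polynomial k) :=
      (X : Polynomial k) • (1 : Matrix (Fin (n+2)) (Fin (n+2)) (Polynomial k)) -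
      (Matrix.of fun i j : Fin (n+2) =>
        if (j:ℕ) = n+1 then -c i else if (i:ℕ) = (j:ℕ)+1 then 1 else 0).map C with hA
    have hentry : ∀ i j : Fin (n+2), A i j =
        (if i = j then X else 0) -
        (if (j:ℕ) = n+1 then -C (c i) else if (i:ℕ) = (j:ℕ)+1 then C 1 else C 0) := by
      intro i j
      simp only [hA, Matrix.sub_apply, Matrix.smul_apply, Matrix.one_apply, Matrix.map_apply,
        Matrix.of_apply, smul_eq_mul, mul_ite, mul_one, mul_zero]
      congr 1
      split_ifs <;> simp
    rw [Matrix.det_succ_row_zero]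
    have h0last : (0 : Fin (n+2)) ≠ Fin.last (n+1) := by
      simp [Fin.ext_iff]
    rw [Fintype.sum_eq_add 0 (Fin.last (n+1)) h0last ?_]
    · -- two main terms
      have hminor0 : (A.submatrix Fin.succ ((0 : Fin (n+2)).succAbove)).det =
          X^(n+1) + ∑ i ∈ range (n+1), C (c (i+1)) * X^i := by
        have hsub : A.submatrix Fin.succ ((0 : Fin (n+2)).succAbove) =
            (X : Polynomial k) • (1 : Matrix (Fin (n+1)) (Fin (n+1)) (Polynomial k)) -
            (Matrix.of fun i j : Fin (n+1) =>
              if (j:ℕ) = n then -(fun m => c (m+1)) i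
              else if (i:ℕ) = (j:ℕ)+1 then 1 else 0).map C := by
          ext i j
          rw [Matrix.submatrix_apply, Fin.succAbove_zero, hentry]
          simp only [Matrix.sub_apply, Matrix.smul_apply, Matrix.one_apply, Matrix.map_apply,
            Matrix.of_apply, smul_eq_mul, mul_ite, mul_one, mul_zero, Fin.val_succ,
            Fin.succ_inj, apply_ite (⇑(C : k →+* Polynomial k)), Polynomial.C_neg,
            Polynomial.C_1, Polynomial.C_0]
          split_ifs <;> first | rfl | (exfalso; omega)
        rw [hsub]
        exact ih (fun m => c (m+1))
      have hminorlast : (A.submatrix Fin.succ ((Fin.last (n+1)).succAbove)).det =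
          (-1 : Polynomial k)^(n+1) := by
        have htri : (A.submatrix Fin.succ ((Fin.last (n+1)).succAbove)).BlockTriangular id := by
          intro i j hij
          rw [Matrix.submatrix_apply, Fin.succAbove_last, hentry]
          have hji : (j:ℕ) < (i:ℕ) := hij
          have h1 : ((i.succ : Fin (n+2)) : ℕ) = (i:ℕ)+1 := rfl
          have hcs : (((Fin.castSucc j) : Fin (n+2)) : ℕ) = (j:ℕ) := rfl
          have hne1 : (i.succ : Fin (n+2)) ≠ Fin.castSucc j := by
            intro hh
            have := congrArg Fin.val hh
            rw [h1, hcs] at this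
            omega
          have hne2 : ((Fin.castSucc j : Fin (n+2)) : ℕ) ≠ n+1 := by
            rw [hcs]; have := j.is_le; omega
          have hne3 : ((i.succ : Fin (n+2)) : ℕ) ≠ ((Fin.castSucc j : Fin (n+2)) : ℕ)+1 := by
            rw [h1, hcs]; omega
          rw [if_neg hne1, if_neg hne2, if_neg hne3]
          simp
        rw [Matrix.det_of_upperTriangular htri]
        have hdiag : ∀ i : Fin (n+1),
            (A.submatrix Fin.succ ((Fin.last (n+1)).succAbove)) i i = -1 := by
          intro i
          rw [Matrix.submatrix_apply, Fin.succAbove_last, hentry]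
          have h1 : ((i.succ : Fin (n+2)) : ℕ) = (i:ℕ)+1 := rfl
          have hcs : (((Fin.castSucc i) : Fin (n+2)) : ℕ) = (i:ℕ) := rfl
          have hne1 : (i.succ : Fin (n+2)) ≠ Fin.castSucc i := by
            intro hh
            have := congrArg Fin.val hh
            rw [h1, hcs] at this
            omega
          have hne2 : ((Fin.castSucc i : Fin (n+2)) : ℕ) ≠ n+1 := by
            rw [hcs]; have := i.is_le; omega
          have heq3 : ((i.succ : Fin (n+2)) : ℕ) = ((Fin.castSucc i : Fin (n+2)) : ℕ)+1 := by
            rw [h1, hcs]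
          rw [if_neg hne1, if_neg hne2, if_pos heq3]
          simp
        rw [Finset.prod_congr rfl (fun i _ => hdiag i)]
        simp
      have hA00 : A 0 (0 : Fin (n+2)) = X := by
        rw [hentry]; norm_num
      have hA0last : A 0 (Fin.last (n+1)) = C (c 0) := by
        rw [hentry]
        rw [if_neg h0last, if_pos (show ((Fin.last (n+1) : Fin (n+2)) : ℕ) = n+1 from rfl)]
        simp
      rw [hminor0, hminorlast, hA00, hA0last]
      have hlv : ((Fin.last (n+1) : Fin (n+2)) : ℕ) = n+1 := rfl
      rw [hlv]
      have hXs : (X : Polynomial k) * ∑ i ∈ range (n+1), C (c (i+1)) * X^i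
          = ∑ i ∈ range (n+1), C (c (i+1)) * X^(i+1) := by
        rw [Finset.mul_sum]
        exact Finset.sum_congr rfl fun i _ => by ring
      rw [Finset.sum_range_succ' (fun i => C (c i) * X^i) (n+1)]
      simp only [Fin.val_zero, pow_zero, one_mul]
      rw [mul_add, hXs]
      have hsq : ((-1 : Polynomial k))^(n+1) * C (c 0) * (-1)^(n+1) = C (c 0) := by
        rw [mul_comm, ← mul_assoc, ← pow_add]
        rw [Even.neg_one_pow ⟨n+1, rfl⟩, one_mul]
      rw [hsq]
      ring
    · intro j hj
      obtain ⟨hj0, hjlast⟩ := hj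
      have hz : A 0 j = 0 := by
        rw [hentry]
        have h1 : ¬ (0 : Fin (n+2)) = j := fun h => hj0 h.symm
        have h2 : ¬ (j:ℕ) = n+1 := fun h => hjlast (Fin.ext (by simpa using h))
        have h3 : ¬ ((0 : Fin (n+2)):ℕ) = (j:ℕ)+1 := by simp
        rw [if_neg h1, if_neg h2, if_neg h3]
        simp
      rw [hz]
      ring

lemma det_charm (k : Type*) [Field k] (n : ℕ) (hn : 1 ≤ n) (p : Polynomial k)
    (hp : p.Monic) (hd : p.natDegree = n) :
    ((X : Polynomial k) • (1 : Matrix (Fin n) (Fin n) (Polynomial k))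
      - (companion k n p).map C).det = p := by
  obtain ⟨m, rfl⟩ : ∃ m, n = m + 1 := ⟨n - 1, by omega⟩
  have h := comp_det k m p.coeff
  have hcomp : companion k (m+1) p = Matrix.of fun i j : Fin (m+1) =>
      if (j:ℕ) = m then -p.coeff (i:ℕ) else if (i:ℕ) = (j:ℕ)+1 then 1 else 0 := rfl
  rw [hcomp, h, ← hd]
  exact (hp.as_sum).symm

lemma det_charm_T (k : Type*) [Field k] (n : ℕ) (hn : 1 ≤ n) (p : Polynomial k)
    (hp : p.Monic) (hd : p.natDegree = n) :
    ((X : Polynomial k) • (1 : Matrix (Fin n) (Fin n) (Polynomial k))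
      - ((companion k n p)ᵀ).map C).det = p := by
  have h : ((X : Polynomial k) • (1 : Matrix (Fin n) (Fin n) (Polynomial k))
      - ((companion k n p)ᵀ).map C)
      = ((X : Polynomial k) • (1 : Matrix (Fin n) (Fin n) (Polynomial k))
      - (companion k n p).map C)ᵀ := by
    rw [Matrix.transpose_sub, Matrix.transpose_smul, Matrix.transpose_one,
      Matrix.transpose_map]
  rw [h, Matrix.det_transpose]
  exact det_charm k n hn p hp hd

lemma hankel_rec (k : Type*) [Field k] (n : ℕ) (hn : 1 ≤ n) (p q : Polynomial k)
    (hp : p.Monic) (hpdeg : p.natDegree = n) (hqdeg : q.natDegree = n - 1)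
    (r : ℕ) :
    ∑ l ∈ range (n+1), p.coeff l * hankelSeq k n p q (r + l) = 0 := by
  set P : PowerSeries k := ((Polynomial.reflect n p : Polynomial k) : PowerSeries k) with hPdef
  set Q : PowerSeries k := ((Polynomial.reflect (n-1) q : Polynomial k) : PowerSeries k) with hQdef
  have hs : ∀ m : ℕ, hankelSeq k n p q m = PowerSeries.coeff m (Q * P⁻¹) := fun m => rfl
  have hP0 : PowerSeries.constantCoeff P ≠ 0 := by
    have h1 : PowerSeries.constantCoeff P = p.coeff n := by
      rw [hPdef, ← PowerSeries.coeff_zero_eq_constantCoeff, Polynomial.coeff_coe,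
        Polynomial.coeff_reflect, Polynomial.revAt_zero]
    rw [h1, ← hpdeg]
    simp [hp.coeff_natDegree]
  have hPS : P * (Q * P⁻¹) = Q := by
    rw [mul_comm Q, ← mul_assoc, PowerSeries.mul_inv_cancel P hP0, one_mul]
  have hQc : PowerSeries.coeff (n + r) Q = 0 := by
    rw [hQdef, Polynomial.coeff_coe, Polynomial.coeff_reflect,
      Polynomial.revAt_eq_self_of_lt (by omega)]
    apply Polynomial.coeff_eq_zero_of_natDegree_lt
    rw [hqdeg]
    omega
  have hPcoeff : ∀ a : ℕ, PowerSeries.coeff a P = p.coeff (Polynomial.revAt n a) := by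
    intro a
    rw [hPdef, Polynomial.coeff_coe, Polynomial.coeff_reflect]
  have h2 : ∑ a ∈ range (n + r + 1),
      PowerSeries.coeff a P * PowerSeries.coeff (n + r - a) (Q * P⁻¹) = 0 := by
    have hcg := congrArg (PowerSeries.coeff (n + r)) hPS
    rw [PowerSeries.coeff_mul, hQc] at hcg
    calc ∑ a ∈ range (n + r + 1),
        PowerSeries.coeff a P * PowerSeries.coeff (n + r - a) (Q * P⁻¹)
        = ∑ ij ∈ Finset.HasAntidiagonal.antidiagonal (n + r),
          PowerSeries.coeff ij.1 P * PowerSeries.coeff ij.2 (Q * P⁻¹) :=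
        (Finset.Nat.sum_antidiagonal_eq_sum_range_succ
          (fun a b => PowerSeries.coeff a P * PowerSeries.coeff b (Q * P⁻¹)) (n + r)).symm
      _ = 0 := hcg
  have h3 : ∑ a ∈ range (n + 1),
      PowerSeries.coeff a P * PowerSeries.coeff (n + r - a) (Q * P⁻¹) = 0 := by
    rw [← h2]
    apply Finset.sum_subset (Finset.range_subset_range.mpr (by omega))
    intro a ha hna
    rw [Finset.mem_range] at ha hna
    have han : n < a := by omega
    rw [hPcoeff, Polynomial.revAt_eq_self_of_lt han,
      Polynomial.coeff_eq_zero_of_natDegree_lt (by omega), zero_mul]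
  have h4 : ∑ a ∈ range (n + 1),
      p.coeff (n - a) * hankelSeq k n p q (r + (n - a)) = 0 := by
    rw [← h3]
    apply Finset.sum_congr rfl
    intro a ha
    rw [Finset.mem_range] at ha
    rw [hPcoeff, Polynomial.revAt_le (by omega), hs]
    have e : n + r - a = r + (n - a) := by omega
    rw [e]
  rw [← Finset.sum_range_reflect (fun l => p.coeff l * hankelSeq k n p q (r + l)) (n+1)]
  rw [← h4]
  apply Finset.sum_congr rfl
  intro a ha
  have e : n + 1 - 1 - a = n - a := by omega
  rw [e]

lemma compT_mul_hankel (k : Type*) [Field k] (n : ℕ) (hn : 1 ≤ n) (p q : Polynomial k)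
    (hp : p.Monic) (hpdeg : p.natDegree = n) (hqdeg : q.natDegree = n - 1)
    (i j : Fin n) :
    ((companion k n p)ᵀ * hankelMat k n p q) i j
      = hankelSeq k n p q ((i:ℕ) + (j:ℕ) + 1) := by
  rw [Matrix.mul_apply]
  by_cases hi : (i:ℕ) = n - 1
  · have hterm : ∀ l : Fin n, (companion k n p)ᵀ i l * hankelMat k n p q l j
        = -(p.coeff (l:ℕ) * hankelSeq k n p q ((j:ℕ) + (l:ℕ))) := by
      intro l
      rw [Matrix.transpose_apply]
      show (if (i:ℕ) = n - 1 then -p.coeff (l:ℕ) else if (l:ℕ) = (i:ℕ)+1 then 1 else 0)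
          * hankelSeq k n p q ((l:ℕ) + (j:ℕ)) = _
      rw [if_pos hi, add_comm (l:ℕ) (j:ℕ)]
      ring
    rw [Finset.sum_congr rfl (fun l _ => hterm l), Finset.sum_neg_distrib]
    rw [Fin.sum_univ_eq_sum_range (fun l => p.coeff l * hankelSeq k n p q ((j:ℕ) + l)) n]
    have hrec := hankel_rec k n hn p q hp hpdeg hqdeg (j:ℕ)
    rw [Finset.sum_range_succ] at hrec
    have hcn : p.coeff n = 1 := by rw [← hpdeg]; exact hp.coeff_natDegree
    rw [hcn, one_mul] at hrec
    have he : (i:ℕ) + (j:ℕ) + 1 = (j:ℕ) + n := by omega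
    rw [he]
    linear_combination -hrec
  · have hlt : (i:ℕ) + 1 < n := by have := i.isLt; omega
    rw [Finset.sum_eq_single (⟨(i:ℕ)+1, hlt⟩ : Fin n)]
    · rw [Matrix.transpose_apply]
      show (if (i:ℕ) = n - 1 then -p.coeff ((i:ℕ)+1) else if (i:ℕ)+1 = (i:ℕ)+1 then 1 else 0)
          * hankelSeq k n p q (((i:ℕ)+1) + (j:ℕ)) = _
      rw [if_neg hi, if_pos rfl, one_mul]
      congr 1
      omega
    · intro l _ hl
      rw [Matrix.transpose_apply]
      show (if (i:ℕ) = n - 1 then -p.coeff (l:ℕ) else if (l:ℕ) = (i:ℕ)+1 then 1 else 0)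
          * hankelSeq k n p q ((l:ℕ) + (j:ℕ)) = 0
      rw [if_neg hi, if_neg (fun hh => hl (Fin.ext hh)), zero_mul]
    · intro h
      exact absurd (Finset.mem_univ _) h

/-- Over any field `k`, for `p, q` monic of degrees `n, n−1` and `H = H_n(q/p)`:
(a) `C_pᵀ·H` is symmetric; (b) `det(H)·p(x) = det(x·H − C_pᵀ·H)`; (c) if `H = K·D·Kᵀ`
with `K` lower triangular with unit diagonal and `D` diagonal, then
`Td = K⁻¹·C_pᵀ·K·D` is symmetric and tridiagonal and `det(D)·p(x) = det(x·D − Td)`. -/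
theorem stmt_16 (k : Type*) [Field k] (n : ℕ) (hn : 1 ≤ n) (p q : Polynomial k)
    (hp : p.Monic) (hpdeg : p.natDegree = n)
    (hq : q.Monic) (hqdeg : q.natDegree = n - 1)
    (H : Matrix (Fin n) (Fin n) k) (hH : H = hankelMat k n p q) :
    ((companion k n p)ᵀ * H).IsSymm ∧
    Polynomial.C H.det * p =
      ((Polynomial.X : Polynomial k) • H.map (Polynomial.C : k →+* Polynomial k)
        - ((companion k n p)ᵀ * H).map (Polynomial.C : k →+* Polynomial k)).det ∧
    ∀ (K : Matrix (Fin n) (Fin n) k) (dv : Fin n → k),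
      (∀ i j : Fin n, i < j → K i j = 0) → (∀ i : Fin n, K i i = 1) →
      H = K * Matrix.diagonal dv * Kᵀ →
      ((K⁻¹ * (companion k n p)ᵀ * K * Matrix.diagonal dv).IsSymm ∧
        (∀ i j : Fin n, ((i : ℕ) + 2 ≤ (j : ℕ) ∨ (j : ℕ) + 2 ≤ (i : ℕ)) →
          (K⁻¹ * (companion k n p)ᵀ * K * Matrix.diagonal dv) i j = 0) ∧
        Polynomial.C (Matrix.diagonal dv).det * p =
          ((Polynomial.X : Polynomial k) •
              (Matrix.diagonal dv).map (Polynomial.C : k →+* Polynomial k)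
            - (K⁻¹ * (companion k n p)ᵀ * K * Matrix.diagonal dv).map
                (Polynomial.C : k →+* Polynomial k)).det) := by
  subst hH
  have hCH := compT_mul_hankel k n hn p q hp hpdeg hqdeg
  have ha : ((companion k n p)ᵀ * hankelMat k n p q).IsSymm := by
    refine Matrix.IsSymm.ext fun i j => ?_
    rw [hCH, hCH]
    congr 1
    omega
  refine ⟨ha, ?_, ?_⟩
  · -- part (b)
    have hfact : (X : Polynomial k) • (hankelMat k n p q).map (C : k →+* Polynomial k)
        - ((companion k n p)ᵀ * hankelMat k n p q).map (C : k →+* Polynomial k)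
        = ((X : Polynomial k) • (1 : Matrix (Fin n) (Fin n) (Polynomial k))
            - ((companion k n p)ᵀ).map C) * (hankelMat k n p q).map C := by
      rw [Matrix.sub_mul, Matrix.smul_mul, Matrix.one_mul, Matrix.map_mul]
    rw [hfact, Matrix.det_mul, det_charm_T k n hn p hp hpdeg, ← RingHom.mapMatrix_apply,
      ← RingHom.map_det, mul_comm]
  · -- part (c)
    intro K dv hK hKdiag hHKD
    have ht : K.BlockTriangular OrderDual.toDual := fun i j hij => hK i j hij
    have hdetK : K.det = 1 := by
      rw [Matrix.det_of_lowerTriangular K ht]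
      simp [hKdiag]
    have hKunit : IsUnit K.det := by rw [hdetK]; exact isUnit_one
    have hKinvK : K⁻¹ * K = 1 := Matrix.nonsing_inv_mul K hKunit
    have hKt : Kᵀ * (K⁻¹)ᵀ = 1 := by
      rw [← Matrix.transpose_mul, hKinvK, Matrix.transpose_one]
    have hTd : K⁻¹ * (companion k n p)ᵀ * K * Matrix.diagonal dv
        = K⁻¹ * ((companion k n p)ᵀ * hankelMat k n p q) * (K⁻¹)ᵀ := by
      rw [hHKD]
      simp only [Matrix.mul_assoc]
      rw [hKt, Matrix.mul_one]
    have hsymmTd : (K⁻¹ * (companion k n p)ᵀ * K * Matrix.diagonal dv).IsSymm := by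
      rw [hTd]
      show (K⁻¹ * ((companion k n p)ᵀ * hankelMat k n p q) * (K⁻¹)ᵀ)ᵀ = _
      rw [Matrix.transpose_mul, Matrix.transpose_mul, Matrix.transpose_transpose, ha,
        ← Matrix.mul_assoc]
    refine ⟨hsymmTd, ?_, ?_⟩
    · -- tridiagonal
      have hKinvTri : ∀ i j : Fin n, i < j → K⁻¹ i j = 0 := by
        letI := K.invertibleOfIsUnitDet hKunit
        have hinv := Matrix.blockTriangular_inv_of_blockTriangular ht
        exact fun i j hij => hinv hij
      have hCt : ∀ l j : Fin n, (l:ℕ) + 1 < (j:ℕ) → (companion k n p)ᵀ l j = 0 := by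
        intro l j hlj
        rw [Matrix.transpose_apply]
        show (if (l:ℕ) = n - 1 then -p.coeff (j:ℕ) else if (j:ℕ) = (l:ℕ)+1 then 1 else 0) = 0
        have hjlt := j.isLt
        rw [if_neg (by omega), if_neg (by omega)]
      have h1 : ∀ i j : Fin n, (i:ℕ) + 2 ≤ (j:ℕ) → (K⁻¹ * (companion k n p)ᵀ) i j = 0 := by
        intro i j hij
        rw [Matrix.mul_apply]
        apply Finset.sum_eq_zero
        intro l _
        by_cases hl : i < l
        · rw [hKinvTri i l hl, zero_mul]
        · have hli : (l:ℕ) ≤ (i:ℕ) := Fin.le_def.mp (Fin.not_lt.mp hl)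
          rw [hCt l j (by omega), mul_zero]
      have h2 : ∀ i j : Fin n, (i:ℕ) + 2 ≤ (j:ℕ) →
          (K⁻¹ * (companion k n p)ᵀ * K) i j = 0 := by
        intro i j hij
        rw [Matrix.mul_apply]
        apply Finset.sum_eq_zero
        intro l _
        by_cases hl : (i:ℕ) + 2 ≤ (l:ℕ)
        · rw [h1 i l hl, zero_mul]
        · rw [hK l j (by rw [Fin.lt_def]; omega), mul_zero]
      have h3 : ∀ i j : Fin n, (i:ℕ) + 2 ≤ (j:ℕ) →
          (K⁻¹ * (companion k n p)ᵀ * K * Matrix.diagonal dv) i j = 0 := by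
        intro i j hij
        rw [Matrix.mul_diagonal, h2 i j hij, zero_mul]
      intro i j hij
      rcases hij with hij | hij
      · exact h3 i j hij
      · have e : (K⁻¹ * (companion k n p)ᵀ * K * Matrix.diagonal dv) i j
            = (K⁻¹ * (companion k n p)ᵀ * K * Matrix.diagonal dv) j i :=
          congrFun (congrFun hsymmTd j) i
        rw [e]
        exact h3 j i hij
    · -- det part
      have hfact2 : (X : Polynomial k) •
            (Matrix.diagonal dv).map (C : k →+* Polynomial k)
          - (K⁻¹ * (companion k n p)ᵀ * K * Matrix.diagonal dv).map
              (C : k →+* Polynomial k)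
          = (K⁻¹).map (C : k →+* Polynomial k) *
            ((X : Polynomial k) • (1 : Matrix (Fin n) (Fin n) (Polynomial k))
              - ((companion k n p)ᵀ).map C) *
            (K * Matrix.diagonal dv).map (C : k →+* Polynomial k) := by
        rw [Matrix.mul_sub, Matrix.sub_mul]
        congr 1
        · rw [Matrix.mul_smul, Matrix.mul_one, Matrix.smul_mul, ← Matrix.map_mul,
            ← Matrix.mul_assoc, hKinvK, Matrix.one_mul]
        · rw [← Matrix.map_mul, ← Matrix.map_mul, ← Matrix.mul_assoc, Matrix.mul_assoc (K⁻¹)]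
      rw [hfact2, Matrix.det_mul, Matrix.det_mul, det_charm_T k n hn p hp hpdeg,
        ← RingHom.mapMatrix_apply, ← RingHom.mapMatrix_apply, ← RingHom.map_det,
        ← RingHom.map_det, Matrix.det_nonsing_inv, hdetK, Matrix.det_mul, hdetK]
      simp only [Ring.inverse_one, Polynomial.C_1, one_mul, mul_one]
      exact mul_comm _ _
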